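/- Let D ≥ 1, let m_p, m_q > 0, n_p, n_q > 0, ν_{p,q}, ν_{q,p} > 0, T_p ≥ 0, T_q ≥ 0 and v̄_p, v̄_q ∈ ℝ^D, and set ρ_p = m_p n_p, ρ_q = m_q n_q. Define the mixture velocity u = (ρ_p ν_{p,q} v̄_p + ρ_q ν_{q,p} v̄_q)/(ρ_p ν_{p,q} + ρ_q ν_{q,p}) and the mixture temperature T_{p,q} = (n_p ν_{p,q} T_p + n_q ν_{q,p} T_q)/(n_p ν_{p,q} + n_q ν_{q,p}) + (ρ_p ν_{p,q}(|v̄_p|² − |u|²) + ρ_q ν_{q,p}(|v̄_q|² − |u|²)) / (D (n_p ν_{p,q} + n_q ν_{q,p})). Then T_{p,q} ≥ 0. -/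

import Mathlib

/-- Nonnegativity of the mixture temperature `T_{p,q}` in the multispecies BGK
model. -/
theorem bgk_mixture_temperature_nonneg
    (D : ℕ) (hD : 1 ≤ D) (mp mq np nq νpq νqp Tp Tq : ℝ)
    (hmp : 0 < mp) (hmq : 0 < mq) (hnp : 0 < np) (hnq : 0 < nq)
    (hνpq : 0 < νpq) (hνqp : 0 < νqp) (hTp : 0 ≤ Tp) (hTq : 0 ≤ Tq)
    (vbp vbq : EuclideanSpace ℝ (Fin D))
    (ρp ρq : ℝ) (hρp : ρp = mp * np) (hρq : ρq = mq * nq)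
    (u : EuclideanSpace ℝ (Fin D))
    (hu : u = (ρp * νpq + ρq * νqp)⁻¹ • ((ρp * νpq) • vbp + (ρq * νqp) • vbq))
    (Tpq : ℝ)
    (hTpq : Tpq = (np * νpq * Tp + nq * νqp * Tq) / (np * νpq + nq * νqp)
      + (ρp * νpq * (‖vbp‖ ^ 2 - ‖u‖ ^ 2) + ρq * νqp * (‖vbq‖ ^ 2 - ‖u‖ ^ 2))
        / ((D : ℝ) * (np * νpq + nq * νqp))) :
    0 ≤ Tpq := by
  set a := ρp * νpq with ha_def
  set b := ρq * νqp with hb_def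
  have ha : 0 < a := by rw [ha_def, hρp]; positivity
  have hb : 0 < b := by rw [hb_def, hρq]; positivity
  have hab : 0 < a + b := by linarith
  -- bound ‖u‖
  have hnu : ‖u‖ ≤ (a + b)⁻¹ * (a * ‖vbp‖ + b * ‖vbq‖) := by
    rw [hu, norm_smul, norm_inv, Real.norm_eq_abs, abs_of_pos hab]
    gcongr
    calc ‖a • vbp + b • vbq‖ ≤ ‖a • vbp‖ + ‖b • vbq‖ := norm_add_le _ _
      _ = a * ‖vbp‖ + b * ‖vbq‖ := by
          rw [norm_smul, norm_smul, Real.norm_eq_abs, Real.norm_eq_abs,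
            abs_of_pos ha, abs_of_pos hb]
  have hkey : (a + b) * ‖u‖ ^ 2 ≤ a * ‖vbp‖ ^ 2 + b * ‖vbq‖ ^ 2 := by
    have h1 : ‖u‖ ^ 2 ≤ ((a + b)⁻¹ * (a * ‖vbp‖ + b * ‖vbq‖)) ^ 2 :=
      pow_le_pow_left₀ (norm_nonneg u) hnu 2
    have h5 : (a * ‖vbp‖ + b * ‖vbq‖) ^ 2
        ≤ (a + b) * (a * ‖vbp‖ ^ 2 + b * ‖vbq‖ ^ 2) := by
      nlinarith [mul_nonneg (mul_nonneg ha.le hb.le) (sq_nonneg (‖vbp‖ - ‖vbq‖))]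
    calc (a + b) * ‖u‖ ^ 2
        ≤ (a + b) * ((a + b)⁻¹ * (a * ‖vbp‖ + b * ‖vbq‖)) ^ 2 := by
          exact mul_le_mul_of_nonneg_left h1 hab.le
      _ = (a + b)⁻¹ * (a * ‖vbp‖ + b * ‖vbq‖) ^ 2 := by
          field_simp
      _ ≤ (a + b)⁻¹ * ((a + b) * (a * ‖vbp‖ ^ 2 + b * ‖vbq‖ ^ 2)) := by
          exact mul_le_mul_of_nonneg_left h5 (inv_nonneg.2 hab.le)
      _ = a * ‖vbp‖ ^ 2 + b * ‖vbq‖ ^ 2 := by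
          field_simp
  have hden : (0:ℝ) < np * νpq + nq * νqp := by positivity
  have hD' : (0:ℝ) < (D:ℝ) := by exact_mod_cast hD
  rw [hTpq]
  have h3 : (0:ℝ) ≤ (np * νpq * Tp + nq * νqp * Tq) / (np * νpq + nq * νqp) := by
    positivity
  have h4 : (0:ℝ) ≤ (a * (‖vbp‖ ^ 2 - ‖u‖ ^ 2) + b * (‖vbq‖ ^ 2 - ‖u‖ ^ 2))
      / ((D : ℝ) * (np * νpq + nq * νqp)) := by
    apply div_nonneg _ (by positivity)
    nlinarith
  linarith
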